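/- If {a >_lex b >_lex c} and {a >_lex c >_lex d} are both sorted subsets of V_{n,d}^α, then {a >_lex b >_lex c >_lex d} is a sorted subset (i.e., (b,d) is also a sorted pair). -/
import Mathlib


/-- The set `V_{n,d}^α` of nonnegative integer tuples with coordinate sum `d`
and coordinatewise bound `α`. -/
def VT (n d : ℕ) (α : Fin n → ℕ) : Set (Fin n → ℕ) :=
  {c | (∑ i, c i) = d ∧ ∀ i, c i ≤ α i}

/-- `a >_lex b`: the leftmost nonzero entry of `a - b` is positive. -/
def lexGT {n : ℕ} (a b : Fin n → ℕ) : Prop :=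
  ∃ i : Fin n, (∀ j, j < i → a j = b j) ∧ b i < a i

/-- `sort(a,b) = (a,b)` for Sturmfels' sorting operator: for every `t`, the prefix
sum of `a` up to `t` equals the ceiling of half the prefix sum of `a + b`. -/
def sortedPair {n : ℕ} (a b : Fin n → ℕ) : Prop :=
  ∀ t : Fin n, 2 * (∑ i ∈ Finset.Iic t, a i)
    = (∑ i ∈ Finset.Iic t, (a i + b i)) + (∑ i ∈ Finset.Iic t, (a i + b i)) % 2

/-- The sorting signature set `Δ(a,b)` of a sorted pair, recorded (0-indexed) as the
set of positions `t` where the prefix sum of `b` is one less than that of `a`. -/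
def sigSet {n : ℕ} (a b : Fin n → ℕ) : Finset (Fin n) :=
  Finset.univ.filter (fun t => (∑ i ∈ Finset.Iic t, b i) + 1 = ∑ i ∈ Finset.Iic t, a i)

/-- Adjacency in the sorting graph `𝒢(d,α)`. -/
def adjG {n : ℕ} (a b : Fin n → ℕ) : Prop :=
  (lexGT a b ∧ sortedPair a b) ∨ (lexGT b a ∧ sortedPair b a)

/-- A clique of the sorting graph `𝒢(d,α)`. -/
def isClique (n d : ℕ) (α : Fin n → ℕ) (S : Finset (Fin n → ℕ)) : Prop :=
  (↑S ⊆ VT n d α) ∧ ∀ a ∈ S, ∀ b ∈ S, a ≠ b → adjG a b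

/-- A maximal clique of the sorting graph `𝒢(d,α)`. -/
def isMaxClique (n d : ℕ) (α : Fin n → ℕ) (S : Finset (Fin n → ℕ)) : Prop :=
  isClique n d α S ∧ ∀ T, isClique n d α T → S ⊆ T → S = T

/-- If `{a >_lex b >_lex c}` and `{a >_lex c >_lex e}` are sorted subsets of
`V_{n,d}^α`, then so is `{a >_lex b >_lex c >_lex e}`, i.e. `(b,e)` is also a
sorted pair. -/
lemma sorted_bound {n : ℕ} {a b : Fin n → ℕ} (h : sortedPair a b) (t : Fin n) :
    (∑ i ∈ Finset.Iic t, b i) ≤ (∑ i ∈ Finset.Iic t, a i) ∧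
    (∑ i ∈ Finset.Iic t, a i) ≤ (∑ i ∈ Finset.Iic t, b i) + 1 := by
  have := h t
  rw [Finset.sum_add_distrib] at this
  omega

theorem stmt6 (n d : ℕ) (α : Fin n → ℕ) (a b c e : Fin n → ℕ)
    (ha : a ∈ VT n d α) (hb : b ∈ VT n d α) (hc : c ∈ VT n d α) (he : e ∈ VT n d α)
    (hab : lexGT a b) (hbc : lexGT b c) (hce : lexGT c e)
    (sab : sortedPair a b) (sbc : sortedPair b c) (sac : sortedPair a c)
    (sce : sortedPair c e) (sae : sortedPair a e) :
    lexGT b e ∧ sortedPair b e := by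
  constructor
  · obtain ⟨i, hib, hlti⟩ := hbc
    obtain ⟨j, hjc, hltj⟩ := hce
    rcases lt_trichotomy i j with h | h | h
    · exact ⟨i, fun l hl => (hib l hl).trans (hjc l (hl.trans h)),
        by rw [← hjc i h]; exact hlti⟩
    · subst h
      exact ⟨i, fun l hl => (hib l hl).trans (hjc l hl), hltj.trans hlti⟩
    · exact ⟨j, fun l hl => (hib l (hl.trans h)).trans (hjc l hl),
        by rw [hib j h]; exact hltj⟩
  · intro t
    rw [Finset.sum_add_distrib]
    have h1 := sorted_bound sab t
    have h2 := sorted_bound sbc t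
    have h3 := sorted_bound sac t
    have h4 := sorted_bound sce t
    have h5 := sorted_bound sae t
    omega
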